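/- Under the hypotheses and with the matrices Λ^(k), Δ^(k), Ω^(k), Θ^(k) constructed as in the explicit output bounds theorem (Theorem 3.1 of the paper), let q satisfy 1/q = 1 − 1/p (with q = ∞ when p = 1 and q = 1 when p = ∞). Define γ^U_j = ε‖Λ^(0)_{j,:}‖_q + Λ^(0)_{j,:} x₀ + Σ_{k=1}^{m} Λ^(k)_{j,:}(b^(k) + Δ^(k)_{:,j}) and γ^L_j = −ε‖Ω^(0)_{j,:}‖_q + Ω^(0)_{j,:} x₀ + Σ_{k=1}^{m} Ω^(k)_{j,:}(b^(k) + Θ^(k)_{:,j}). Then for every output index j and every x with ‖x − x₀‖_p ≤ ε, γ^L_j ≤ f_j(x) ≤ γ^U_j. -/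

import Mathlib

open Matrix Finset
open scoped ENNReal

lemma holder_pi {N : ℕ} (p q : ℝ≥0∞) (hp : 1 ≤ p) (hpq : p⁻¹ + q⁻¹ = 1)
    (v w : Fin N → ℝ) :
    ∑ i, v i * w i ≤
      ‖(WithLp.equiv q (Fin N → ℝ)).symm v‖ * ‖(WithLp.equiv p (Fin N → ℝ)).symm w‖ := by
  have hp0 : p ≠ 0 := by intro h; rw [h] at hp; simp at hp
  rcases eq_or_ne p 1 with rfl | hp1
  · have hq : q = ∞ := by
      rw [inv_one] at hpq
      have h0 : q⁻¹ = 0 := (ENNReal.add_right_inj (by simp : (1:ℝ≥0∞) ≠ ∞)).mp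
        (by simpa using hpq)
      simpa [ENNReal.inv_eq_zero] using h0
    subst hq
    rw [WithLp.equiv_symm_apply, PiLp.norm_toLp, WithLp.equiv_symm_apply,
      PiLp.norm_eq_sum (by simp) (WithLp.toLp 1 w)]
    simp only [PiLp.toLp_apply, ENNReal.toReal_one, Real.rpow_one, ne_eq,
      one_ne_zero, not_false_eq_true, div_self]
    calc ∑ i, v i * w i ≤ ∑ i, ‖v‖ * ‖w i‖ := by
          refine Finset.sum_le_sum fun i _ => ?_
          calc v i * w i ≤ |v i * w i| := le_abs_self _
            _ = |v i| * |w i| := abs_mul _ _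
            _ ≤ ‖v‖ * ‖w i‖ := by
                exact mul_le_mul_of_nonneg_right (norm_le_pi_norm v i) (abs_nonneg _)
      _ = ‖v‖ * ∑ i, ‖w i‖ := by rw [Finset.mul_sum]
  rcases eq_or_ne p ∞ with rfl | hptop
  · have hq : q = 1 := by
      rw [ENNReal.inv_top, zero_add] at hpq
      simpa [ENNReal.inv_eq_one] using hpq
    subst hq
    rw [WithLp.equiv_symm_apply, PiLp.norm_toLp, PiLp.norm_eq_sum (by simp) (WithLp.toLp 1 v)]
    simp only [PiLp.toLp_apply, ENNReal.toReal_one, Real.rpow_one, ne_eq,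
      one_ne_zero, not_false_eq_true, div_self]
    calc ∑ i, v i * w i ≤ ∑ i, ‖v i‖ * ‖w‖ := by
          refine Finset.sum_le_sum fun i _ => ?_
          calc v i * w i ≤ |v i * w i| := le_abs_self _
            _ = |v i| * |w i| := abs_mul _ _
            _ ≤ ‖v i‖ * ‖w‖ := by
                exact mul_le_mul_of_nonneg_left (norm_le_pi_norm w i) (abs_nonneg _)
      _ = (∑ i, ‖v i‖) * ‖w‖ := by rw [Finset.sum_mul]
  · have h1p : 1 < p := hp.lt_of_ne (Ne.symm hp1)
    have hq0 : q ≠ 0 := by rintro rfl; simp at hpq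
    have hqtop : q ≠ ∞ := by
      rintro rfl
      rw [ENNReal.inv_top, add_zero] at hpq
      exact hp1 (by simpa [ENNReal.inv_eq_one] using hpq)
    have hpr : p.toReal.HolderConjugate q.toReal := by
      rw [Real.holderConjugate_iff]
      constructor
      · have := (ENNReal.toReal_lt_toReal (by simp : (1:ℝ≥0∞) ≠ ∞) hptop).mpr h1p
        simpa using this
      · have h1 : (p⁻¹ + q⁻¹).toReal = 1 := by rw [hpq]; simp
        rw [ENNReal.toReal_add (by simp [hp0]) (by simp [hq0]), ENNReal.toReal_inv,
          ENNReal.toReal_inv] at h1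
        simpa [one_div] using h1
    have hq_pos : 0 < q.toReal := ENNReal.toReal_pos hq0 hqtop
    have hp_pos : 0 < p.toReal := ENNReal.toReal_pos hp0 hptop
    rw [PiLp.norm_eq_sum hq_pos, PiLp.norm_eq_sum hp_pos]
    simp only [WithLp.equiv_symm_apply, PiLp.toLp_apply, Real.norm_eq_abs]
    exact Real.inner_le_Lp_mul_Lq Finset.univ v w hpr.symm

lemma pilp_norm_nonneg {N : ℕ} (q : ℝ≥0∞) (v : Fin N → ℝ) :
    0 ≤ ‖(WithLp.equiv q (Fin N → ℝ)).symm v‖ := by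
  by_cases h0 : q = 0
  · subst h0; rw [PiLp.norm_eq_card]; positivity
  by_cases htop : q = ∞
  · subst htop
    rw [PiLp.norm_eq_ciSup]
    exact Real.iSup_nonneg fun i => norm_nonneg _
  · rw [PiLp.norm_eq_sum (ENNReal.toReal_pos h0 htop)]
    positivity

lemma pilp_norm_neg {N : ℕ} (q : ℝ≥0∞) (v : Fin N → ℝ) :
    ‖(WithLp.equiv q (Fin N → ℝ)).symm (-v)‖ = ‖(WithLp.equiv q (Fin N → ℝ)).symm v‖ := by
  by_cases h0 : q = 0
  · subst h0
    rw [PiLp.norm_eq_card, PiLp.norm_eq_card]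
    simp only [WithLp.equiv_symm_apply, PiLp.toLp_apply, Pi.neg_apply, norm_neg]
  by_cases htop : q = ∞
  · subst htop
    rw [PiLp.norm_eq_ciSup, PiLp.norm_eq_ciSup]
    simp only [WithLp.equiv_symm_apply, PiLp.toLp_apply, Pi.neg_apply, norm_neg]
  · rw [PiLp.norm_eq_sum (ENNReal.toReal_pos h0 htop),
      PiLp.norm_eq_sum (ENNReal.toReal_pos h0 htop)]
    simp only [WithLp.equiv_symm_apply, PiLp.toLp_apply, Pi.neg_apply, norm_neg]

lemma crown_sum_expand {N M : ℕ} (Λv Δv bb : Fin M → ℝ) (Wm : Matrix (Fin M) (Fin N) ℝ)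
    (v : Fin N → ℝ) :
    ∑ i, Λv i * ((Wm.mulVec v + bb) i + Δv i) =
      (∑ i, (∑ r, Λv r * Wm r i) * v i) + ∑ i, Λv i * (bb i + Δv i) := by
  simp only [Pi.add_apply, Matrix.mulVec, dotProduct, Finset.mul_sum, Finset.sum_mul,
    mul_add, Finset.sum_add_distrib]
  rw [Finset.sum_comm]
  rw [add_assoc]
  congr 1
  exact Finset.sum_congr rfl fun i _ => Finset.sum_congr rfl fun r _ => by ring

lemma crown_aux (m₀ : ℕ) (n : ℕ → ℕ)
    (W : (k : ℕ) → Matrix (Fin (n (k + 1))) (Fin (n k)) ℝ)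
    (b : (k : ℕ) → Fin (n (k + 1)) → ℝ)
    (σ : ℝ → ℝ)
    (Φ : (k : ℕ) → (Fin (n 0) → ℝ) → (Fin (n k) → ℝ))
    (hΦ : ∀ k, k + 1 ≤ m₀ → ∀ x,
      Φ (k + 1) x = fun r => σ (((W k).mulVec (Φ k x) + b k) r))
    (l u : (k : ℕ) → Fin (n k) → ℝ)
    (x : Fin (n 0) → ℝ)
    (hpre : ∀ k, k + 1 ≤ m₀ → ∀ r : Fin (n (k + 1)),
      ((W k).mulVec (Φ k x) + b k) r ∈ Set.Icc (l (k + 1) r) (u (k + 1) r))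
    (Λ Δ : (k : ℕ) → Fin (n k) → ℝ)
    (hΔtop : ∀ i, Δ (m₀ + 1) i = 0)
    (hkey : ∀ k, k + 1 ≤ m₀ → ∀ i : Fin (n (k + 1)),
      ∀ y ∈ Set.Icc (l (k + 1) i) (u (k + 1) i),
      (∑ r, Λ (k + 2) r * W (k + 1) r i) * σ y ≤ Λ (k + 1) i * (y + Δ (k + 1) i)) :
    ∀ d k, k + d = m₀ →
      ∑ i, Λ (m₀ + 1) i * ((W m₀).mulVec (Φ m₀ x) + b m₀) i ≤
        (∑ i, (∑ r, Λ (k + 1) r * W k r i) * Φ k x i) +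
        ∑ k' ∈ Finset.Ico k (m₀ + 1), ∑ i, Λ (k' + 1) i * (b k' i + Δ (k' + 1) i) := by
  intro d
  induction d with
  | zero =>
    intro k hk
    have hk' : k = m₀ := by omega
    subst hk'
    have hico : Finset.Ico k (k + 1) = {k} := by
      rw [Finset.Ico_add_one_right_eq_Icc, Finset.Icc_self]
    rw [hico, Finset.sum_singleton]
    have := crown_sum_expand (Λ (k + 1)) (Δ (k + 1)) (b k) (W k) (Φ k x)
    simp only [hΔtop, add_zero] at this ⊢
    linarith [this]
  | succ d ih =>
    intro k hk
    have h1 : (k + 1) + d = m₀ := by omega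
    have hk1 : k + 1 ≤ m₀ := by omega
    refine (ih (k + 1) h1).trans ?_
    rw [hΦ k hk1 x]
    have step1 : ∑ i, (∑ r, Λ (k + 2) r * W (k + 1) r i) *
        σ (((W k).mulVec (Φ k x) + b k) i) ≤
        ∑ i, Λ (k + 1) i * (((W k).mulVec (Φ k x) + b k) i + Δ (k + 1) i) :=
      Finset.sum_le_sum fun i _ => hkey k hk1 i _ (hpre k hk1 i)
    have step2 := crown_sum_expand (Λ (k + 1)) (Δ (k + 1)) (b k) (W k) (Φ k x)
    have step3 : ∑ k' ∈ Finset.Ico k (m₀ + 1), ∑ i, Λ (k' + 1) i * (b k' i + Δ (k' + 1) i) =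
        (∑ i, Λ (k + 1) i * (b k i + Δ (k + 1) i)) +
        ∑ k' ∈ Finset.Ico (k + 1) (m₀ + 1), ∑ i, Λ (k' + 1) i * (b k' i + Δ (k' + 1) i) :=
      Finset.sum_eq_sum_Ico_succ_bot (by omega) _
    rw [step3]
    linarith [step1, step2]
/-- **CROWN closed-form global bounds (Corollary 3.3).**
Under the hypotheses of Theorem 3.1 (an `m = m₀ + 1` layer network, pre-activation bounds
valid on the `ℓ_p` ball of radius `ε` around `x₀`, linear activation bounds, and the matrices
`Λ, Δ` and `Ω, Θ` constructed by the sign-based backward recursion), with `q` the conjugate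
exponent of `p` (`1/p + 1/q = 1`), the fixed values
`γU = ε ‖Λ 0‖_q + Λ 0 ⋅ x₀ + Σ_{k=1}^{m} Λ k ⋅ (b^{(k)} + Δ k)` and
`γL = -ε ‖Ω 0‖_q + Ω 0 ⋅ x₀ + Σ_{k=1}^{m} Ω k ⋅ (b^{(k)} + Θ k)`
satisfy `γL ≤ f_j x ≤ γU` for all `x` in the ball. -/
theorem crown_closed_form_global_bounds (m₀ : ℕ) (n : ℕ → ℕ)
    (W : (k : ℕ) → Matrix (Fin (n (k + 1))) (Fin (n k)) ℝ)
    (b : (k : ℕ) → Fin (n (k + 1)) → ℝ)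
    (σ : ℝ → ℝ)
    -- the network
    (Φ : (k : ℕ) → (Fin (n 0) → ℝ) → (Fin (n k) → ℝ))
    (hΦ0 : ∀ x, Φ 0 x = x)
    (hΦ : ∀ k, k + 1 ≤ m₀ → ∀ x,
      Φ (k + 1) x = fun r => σ (((W k).mulVec (Φ k x) + b k) r))
    (f : (Fin (n 0) → ℝ) → (Fin (n (m₀ + 1)) → ℝ))
    (hf : ∀ x, f x = (W m₀).mulVec (Φ m₀ x) + b m₀)
    -- the perturbation ball and the conjugate exponent
    (p q : ℝ≥0∞) (hp : 1 ≤ p) (hpq : p⁻¹ + q⁻¹ = 1)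
    (x₀ : Fin (n 0) → ℝ) (ε : ℝ) (hε : 0 < ε)
    -- pre-activation bounds for hidden layers k+1 ∈ {1, …, m₀}
    (l u : (k : ℕ) → Fin (n k) → ℝ)
    (hlu : ∀ k, k + 1 ≤ m₀ → ∀ r : Fin (n (k + 1)), l (k + 1) r ≤ u (k + 1) r)
    (hpre : ∀ k, k + 1 ≤ m₀ → ∀ r : Fin (n (k + 1)), ∀ x : Fin (n 0) → ℝ,
      ‖(WithLp.equiv p (Fin (n 0) → ℝ)).symm (x - x₀)‖ ≤ ε →
      l (k + 1) r ≤ ((W k).mulVec (Φ k x) + b k) r ∧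
        ((W k).mulVec (Φ k x) + b k) r ≤ u (k + 1) r)
    -- linear bounds on the activation function for hidden layers k+1 ∈ {1, …, m₀}
    (αU αL βU βL : (k : ℕ) → Fin (n k) → ℝ)
    (hαU : ∀ k, k + 1 ≤ m₀ → ∀ r : Fin (n (k + 1)), 0 ≤ αU (k + 1) r)
    (hαL : ∀ k, k + 1 ≤ m₀ → ∀ r : Fin (n (k + 1)), 0 ≤ αL (k + 1) r)
    (hσbound : ∀ k, k + 1 ≤ m₀ → ∀ r : Fin (n (k + 1)),
      ∀ y ∈ Set.Icc (l (k + 1) r) (u (k + 1) r),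
      αL (k + 1) r * (y + βL (k + 1) r) ≤ σ y ∧ σ y ≤ αU (k + 1) r * (y + βU (k + 1) r))
    -- the output coordinate
    (j : Fin (n (m₀ + 1)))
    -- the backward recursion for the upper bound
    (Λ Δ : (k : ℕ) → Fin (n k) → ℝ)
    (hΛtop : ∀ i, Λ (m₀ + 1) i = if i = j then 1 else 0)
    (hΛ : ∀ k, k ≤ m₀ → ∀ i : Fin (n k),
      Λ k i = (∑ r, Λ (k + 1) r * W k r i) *
        (if k = 0 then 1
         else if 0 ≤ ∑ r, Λ (k + 1) r * W k r i then αU k i else αL k i))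
    (hΔtop : ∀ i, Δ (m₀ + 1) i = 0)
    (hΔ : ∀ k, 1 ≤ k → k ≤ m₀ → ∀ i : Fin (n k),
      Δ k i = if 0 ≤ ∑ r, Λ (k + 1) r * W k r i then βU k i else βL k i)
    -- the backward recursion for the lower bound
    (Ω Θ : (k : ℕ) → Fin (n k) → ℝ)
    (hΩtop : ∀ i, Ω (m₀ + 1) i = if i = j then 1 else 0)
    (hΩ : ∀ k, k ≤ m₀ → ∀ i : Fin (n k),
      Ω k i = (∑ r, Ω (k + 1) r * W k r i) *
        (if k = 0 then 1
         else if 0 ≤ ∑ r, Ω (k + 1) r * W k r i then αL k i else αU k i))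
    (hΘtop : ∀ i, Θ (m₀ + 1) i = 0)
    (hΘ : ∀ k, 1 ≤ k → k ≤ m₀ → ∀ i : Fin (n k),
      Θ k i = if 0 ≤ ∑ r, Ω (k + 1) r * W k r i then βL k i else βU k i) :
    ∀ x : Fin (n 0) → ℝ, ‖(WithLp.equiv p (Fin (n 0) → ℝ)).symm (x - x₀)‖ ≤ ε →
      -ε * ‖(WithLp.equiv q (Fin (n 0) → ℝ)).symm (Ω 0)‖ + (∑ i, Ω 0 i * x₀ i) +
          (∑ k ∈ Finset.range (m₀ + 1), ∑ i, Ω (k + 1) i * (b k i + Θ (k + 1) i)) ≤ f x j ∧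
      f x j ≤ ε * ‖(WithLp.equiv q (Fin (n 0) → ℝ)).symm (Λ 0)‖ + (∑ i, Λ 0 i * x₀ i) +
          (∑ k ∈ Finset.range (m₀ + 1), ∑ i, Λ (k + 1) i * (b k i + Δ (k + 1) i)) := by
  intro x hx
  have hpre' : ∀ k, k + 1 ≤ m₀ → ∀ r : Fin (n (k + 1)),
      ((W k).mulVec (Φ k x) + b k) r ∈ Set.Icc (l (k + 1) r) (u (k + 1) r) :=
    fun k hk r => Set.mem_Icc.mpr (hpre k hk r x hx)
  -- key inequality for the upper bound
  have hkeyU : ∀ k, k + 1 ≤ m₀ → ∀ i : Fin (n (k + 1)),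
      ∀ y ∈ Set.Icc (l (k + 1) i) (u (k + 1) i),
      (∑ r, Λ (k + 2) r * W (k + 1) r i) * σ y ≤ Λ (k + 1) i * (y + Δ (k + 1) i) := by
    intro k hk i y hy
    have hσ := hσbound k hk i y hy
    have hΛ' := hΛ (k + 1) hk i
    have hΔ' := hΔ (k + 1) (by omega) hk i
    rw [if_neg (Nat.succ_ne_zero k)] at hΛ'
    show (∑ r, Λ (k + 1 + 1) r * W (k + 1) r i) * σ y ≤ Λ (k + 1) i * (y + Δ (k + 1) i)
    by_cases h : 0 ≤ ∑ r, Λ (k + 1 + 1) r * W (k + 1) r i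
    · rw [if_pos h] at hΛ' hΔ'
      rw [hΛ', hΔ']
      nlinarith [mul_le_mul_of_nonneg_left hσ.2 h]
    · rw [if_neg h] at hΛ' hΔ'
      rw [hΛ', hΔ']
      nlinarith [mul_le_mul_of_nonpos_left hσ.1 (le_of_not_ge h)]
  -- key inequality for the lower bound
  have hkeyL : ∀ k, k + 1 ≤ m₀ → ∀ i : Fin (n (k + 1)),
      ∀ y ∈ Set.Icc (l (k + 1) i) (u (k + 1) i),
      (∑ r, -(Ω (k + 2) r) * W (k + 1) r i) * σ y ≤
        -(Ω (k + 1) i) * (y + Θ (k + 1) i) := by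
    intro k hk i y hy
    have hσ := hσbound k hk i y hy
    have hΩ' := hΩ (k + 1) hk i
    have hΘ' := hΘ (k + 1) (by omega) hk i
    rw [if_neg (Nat.succ_ne_zero k)] at hΩ'
    show (∑ r, -(Ω (k + 1 + 1) r) * W (k + 1) r i) * σ y ≤ -(Ω (k + 1) i) * (y + Θ (k + 1) i)
    have hs : (∑ r, -(Ω (k + 1 + 1) r) * W (k + 1) r i) =
        -∑ r, Ω (k + 1 + 1) r * W (k + 1) r i := by
      simp [neg_mul]
    rw [hs]
    by_cases h : 0 ≤ ∑ r, Ω (k + 1 + 1) r * W (k + 1) r i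
    · rw [if_pos h] at hΩ' hΘ'
      rw [hΩ', hΘ']
      nlinarith [mul_le_mul_of_nonneg_left hσ.1 h]
    · rw [if_neg h] at hΩ' hΘ'
      rw [hΩ', hΘ']
      nlinarith [mul_le_mul_of_nonpos_left hσ.2 (le_of_not_ge h)]
  -- apply the backward recursion
  have HU : ∑ i, Λ (m₀ + 1) i * ((W m₀).mulVec (Φ m₀ x) + b m₀) i ≤
      (∑ i, (∑ r, Λ 1 r * W 0 r i) * Φ 0 x i) +
      ∑ k' ∈ Finset.Ico 0 (m₀ + 1), ∑ i, Λ (k' + 1) i * (b k' i + Δ (k' + 1) i) :=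
    crown_aux m₀ n W b σ Φ hΦ l u x hpre' Λ Δ hΔtop hkeyU m₀ 0 (by omega)
  have HL : ∑ i, -(Ω (m₀ + 1) i) * ((W m₀).mulVec (Φ m₀ x) + b m₀) i ≤
      (∑ i, (∑ r, -(Ω 1 r) * W 0 r i) * Φ 0 x i) +
      ∑ k' ∈ Finset.Ico 0 (m₀ + 1), ∑ i, -(Ω (k' + 1) i) * (b k' i + Θ (k' + 1) i) :=
    crown_aux m₀ n W b σ Φ hΦ l u x hpre' (fun k i => -(Ω k i)) Θ
      (fun i => hΘtop i) hkeyL m₀ 0 (by omega)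
  -- simplify the left-hand sides
  have eLU : ∑ i, Λ (m₀ + 1) i * ((W m₀).mulVec (Φ m₀ x) + b m₀) i = f x j := by
    rw [hf]; simp [hΛtop, ite_mul]
  have eLL : ∑ i, -(Ω (m₀ + 1) i) * ((W m₀).mulVec (Φ m₀ x) + b m₀) i = -f x j := by
    rw [hf]; simp [hΩtop, ite_mul, neg_mul]
  -- simplify the layer-0 terms
  have e0U : ∀ i, (∑ r, Λ 1 r * W 0 r i) = Λ 0 i := fun i => by
    rw [hΛ 0 (Nat.zero_le m₀) i]; simp
  have e0L : ∀ i, (∑ r, -(Ω 1 r) * W 0 r i) = -(Ω 0 i) := fun i => by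
    rw [hΩ 0 (Nat.zero_le m₀) i]
    simp [neg_mul, Finset.sum_neg_distrib]
  have e1U : (∑ i, (∑ r, Λ 1 r * W 0 r i) * Φ 0 x i) = ∑ i, Λ 0 i * x i := by
    rw [hΦ0]
    exact Finset.sum_congr rfl fun i _ => by rw [e0U i]
  have e1L : (∑ i, (∑ r, -(Ω 1 r) * W 0 r i) * Φ 0 x i) = ∑ i, -(Ω 0 i) * x i := by
    rw [hΦ0]
    exact Finset.sum_congr rfl fun i _ => by rw [e0L i]
  rw [eLU, e1U, ← Finset.range_eq_Ico] at HU
  rw [eLL, e1L, ← Finset.range_eq_Ico] at HL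
  -- split off the center
  have esplitU : ∑ i, Λ 0 i * x i = (∑ i, Λ 0 i * (x - x₀) i) + ∑ i, Λ 0 i * x₀ i := by
    rw [← Finset.sum_add_distrib]
    exact Finset.sum_congr rfl fun i _ => by rw [Pi.sub_apply]; ring
  have esplitL : ∑ i, -(Ω 0 i) * x i =
      (∑ i, -(Ω 0 i) * (x - x₀) i) + ∑ i, -(Ω 0 i) * x₀ i := by
    rw [← Finset.sum_add_distrib]
    exact Finset.sum_congr rfl fun i _ => by rw [Pi.sub_apply]; ring
  -- Hölder
  have hHU : ∑ i, Λ 0 i * (x - x₀) i ≤ ε * ‖(WithLp.equiv q (Fin (n 0) → ℝ)).symm (Λ 0)‖ := by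
    have h1 := holder_pi p q hp hpq (Λ 0) (x - x₀)
    have h2 : ‖(WithLp.equiv q (Fin (n 0) → ℝ)).symm (Λ 0)‖ *
        ‖(WithLp.equiv p (Fin (n 0) → ℝ)).symm (x - x₀)‖ ≤
        ‖(WithLp.equiv q (Fin (n 0) → ℝ)).symm (Λ 0)‖ * ε :=
      mul_le_mul_of_nonneg_left hx (pilp_norm_nonneg q _)
    calc ∑ i, Λ 0 i * (x - x₀) i ≤ _ := h1
      _ ≤ _ := h2
      _ = ε * ‖(WithLp.equiv q (Fin (n 0) → ℝ)).symm (Λ 0)‖ := mul_comm _ _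
  have hnormL : ‖(WithLp.equiv q (Fin (n 0) → ℝ)).symm (fun i => -(Ω 0 i))‖ =
      ‖(WithLp.equiv q (Fin (n 0) → ℝ)).symm (Ω 0)‖ := by
    have hfe : (fun i => -(Ω 0 i)) = -(Ω 0) := rfl
    rw [hfe]
    exact pilp_norm_neg q (Ω 0)
  have hHL : ∑ i, -(Ω 0 i) * (x - x₀) i ≤
      ε * ‖(WithLp.equiv q (Fin (n 0) → ℝ)).symm (Ω 0)‖ := by
    have h1 := holder_pi p q hp hpq (fun i => -(Ω 0 i)) (x - x₀)
    rw [hnormL] at h1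
    have h2 : ‖(WithLp.equiv q (Fin (n 0) → ℝ)).symm (Ω 0)‖ *
        ‖(WithLp.equiv p (Fin (n 0) → ℝ)).symm (x - x₀)‖ ≤
        ‖(WithLp.equiv q (Fin (n 0) → ℝ)).symm (Ω 0)‖ * ε :=
      mul_le_mul_of_nonneg_left hx (pilp_norm_nonneg q _)
    calc ∑ i, -(Ω 0 i) * (x - x₀) i ≤ _ := h1
      _ ≤ _ := h2
      _ = ε * ‖(WithLp.equiv q (Fin (n 0) → ℝ)).symm (Ω 0)‖ := mul_comm _ _
  -- negation bookkeeping for the lower bound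
  have enegc : ∑ i, -(Ω 0 i) * x₀ i = -∑ i, Ω 0 i * x₀ i := by
    simp [neg_mul, Finset.sum_neg_distrib]
  have enegT : ∑ k' ∈ Finset.range (m₀ + 1), ∑ i, -(Ω (k' + 1) i) * (b k' i + Θ (k' + 1) i) =
      -∑ k' ∈ Finset.range (m₀ + 1), ∑ i, Ω (k' + 1) i * (b k' i + Θ (k' + 1) i) := by
    simp [neg_mul, Finset.sum_neg_distrib]
  constructor
  · rw [esplitL, enegc, enegT] at HL
    linarith [HL, hHL]
  · rw [esplitU] at HU
    linarith [HU, hHU]
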